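/- Fix W ≥ 2, a flow size distribution θ ∈ ℝ^W with θ_k > 0 and Σθ_k = 1, and p ∈ (0,1), q = 1 − p. For Sample and Hold, let d₀ = Σ_{k=1}^W q^k θ_k and d_j = Σ_{k=j}^W p q^{k−j} θ_k for 1 ≤ j ≤ W, and let B̃_SH be the W×W upper-triangular matrix with entries p q^{k−j} for 1 ≤ j ≤ k ≤ W. Then p(d₀ + d₁) = d₁, and consequently B̃_SH⁻¹ · [p(d₀+d₁), d₂, …, d_W]ᵀ = θ; i.e., the closed-form Sample and Hold estimator θ̂ = (1/n)·B̃_SH⁻¹·[p(M'₀+M'₁), M'₂, …, M'_W]ᵀ is unbiased, since E[M'_j] = n d_j for all j. -/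
import Mathlib


open Matrix

/-- For Sample and Hold with parameter `p`, with
`d₀ = Σ_{k=1}^W q^k θ_k`, `d_j = Σ_{k=j}^W p q^{k−j} θ_k` (for `1 ≤ j ≤ W`) and `B̃_SH`
the upper-triangular matrix with entries `p q^{k−j}`, one has `p(d₀ + d₁) = d₁`, and
consequently `B̃_SH⁻¹ · [p(d₀+d₁), d₂, …, d_W]ᵀ = θ`: the closed-form SH estimator
`θ̂ = (1/n)·B̃_SH⁻¹·[p(M'₀+M'₁), M'₂, …, M'_W]ᵀ` is unbiased, since `E[M'_j] = n d_j`.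
Lean index `j : Fin W` corresponds to size `j+1`, so `dd j` is `d_{j+1}`. -/
theorem stmt_19 (W : ℕ) (hW : 2 ≤ W)
    (θ : Fin W → ℝ) (hθpos : ∀ k, 0 < θ k) (hθsum : ∑ k, θ k = 1)
    (p q : ℝ) (hp0 : 0 < p) (hp1 : p < 1) (hq : q = 1 - p)
    (d0 : ℝ) (hd0 : d0 = ∑ k : Fin W, q ^ ((k : ℕ) + 1) * θ k)
    (dd : Fin W → ℝ)
    (hdd : ∀ j, dd j = ∑ k ∈ Finset.univ.filter (fun k : Fin W => j ≤ k),
      p * q ^ ((k : ℕ) - (j : ℕ)) * θ k)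
    (Bt : Matrix (Fin W) (Fin W) ℝ)
    (hBt : ∀ j k : Fin W, Bt j k =
      if (j : ℕ) ≤ (k : ℕ) then p * q ^ ((k : ℕ) - (j : ℕ)) else 0)
    (v : Fin W → ℝ)
    (hv : ∀ j : Fin W, v j = if (j : ℕ) = 0 then p * (d0 + dd ⟨0, by omega⟩) else dd j) :
    p * (d0 + dd ⟨0, by omega⟩) = dd ⟨0, by omega⟩ ∧ Bt⁻¹ *ᵥ v = θ := by
  -- dd at index 0 is the full sum
  have h0 : dd ⟨0, by omega⟩ = ∑ k : Fin W, p * q ^ (k : ℕ) * θ k := by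
    rw [hdd]
    have hf : Finset.filter (fun k : Fin W => (⟨0, by omega⟩ : Fin W) ≤ k) Finset.univ
        = Finset.univ := Finset.filter_true_of_mem (fun k _ => by simp [Fin.le_def])
    rw [hf]
    simp
  have part1 : p * (d0 + dd ⟨0, by omega⟩) = dd ⟨0, by omega⟩ := by
    rw [h0, hd0, ← Finset.sum_add_distrib, Finset.mul_sum]
    refine Finset.sum_congr rfl fun k _ => ?_
    subst hq; ring
  refine ⟨part1, ?_⟩
  -- v = Bt *ᵥ θ
  have hmv : Bt *ᵥ θ = v := by
    funext j
    have : (Bt *ᵥ θ) j = dd j := by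
      rw [hdd, Finset.sum_filter]
      simp only [mulVec, dotProduct, hBt]
      refine Finset.sum_congr rfl fun k _ => ?_
      simp only [Fin.le_def, ite_mul, zero_mul]
    rw [this, hv]
    split_ifs with h
    · have hj : j = ⟨0, by omega⟩ := by ext; exact h
      rw [hj, part1]
    · rfl
  -- Bt is invertible: upper triangular with diagonal p
  have hdet : Bt.det = p ^ W := by
    have htri : Bt.BlockTriangular id := by
      intro i j hij
      rw [hBt]
      rw [if_neg (by exact Nat.not_le.mpr hij)]
    rw [Matrix.det_of_upperTriangular htri]
    have : ∀ i : Fin W, Bt i i = p := by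
      intro i; rw [hBt]; simp
    simp [this]
  have hu : IsUnit Bt.det := by
    rw [hdet]
    exact (isUnit_iff_ne_zero.mpr (pow_ne_zero _ (ne_of_gt hp0)))
  rw [← hmv, Matrix.mulVec_mulVec, Matrix.nonsing_inv_mul Bt hu, Matrix.one_mulVec]
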